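/- arXiv:2604.24904 — 4 statements merged into one kernel-verified Lean document; each statement's English description precedes it below -/
import Mathlib

section
/- Let C₀, C̄₀, and C^{RD} be as above. If (A₀, A₁, b) lies in the Euclidean closure of C₀ and rank(A₀) = d₀, then (A₀, A₁, b) ∈ C̄₀; that is, for all y ∈ ℝᵖ, min(min_{1≤j≤d₁} aⱼ'M₀y, −b'M₀y) ≤ 0, where aⱼ denote the columns of M₀A₁ (equivalently M₀ applied to the columns of A₁). -/
open Matrix

/-- `M` is the annihilator of `A`: the orthogonal projection of `ℝᵖ` onto the orthogonal
complement of the column space of `A`. -/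
def IsAnnihilator {p d : ℕ} (A : Matrix (Fin p) (Fin d) ℝ)
    (M : Matrix (Fin p) (Fin p) ℝ) : Prop :=
  Mᵀ = M ∧ M * M = M ∧ ∀ v : Fin p → ℝ, M *ᵥ v = 0 ↔ ∃ x : Fin d → ℝ, A *ᵥ x = v

open Filter Topology

lemma isUnit_gram {p d : ℕ} {A : Matrix (Fin p) (Fin d) ℝ} (h : A.rank = d) :
    IsUnit (Aᵀ * A) := by
  have hrank : (Aᵀ * A).rank = d := by rw [Matrix.rank_transpose_mul_self, h]
  have hker : LinearMap.ker (Aᵀ * A).mulVecLin = ⊥ := by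
    have hrn := LinearMap.finrank_range_add_finrank_ker (Aᵀ * A).mulVecLin
    rw [Module.finrank_fin_fun] at hrn
    rw [Matrix.rank] at hrank
    have h0 : Module.finrank ℝ (LinearMap.ker (Aᵀ * A).mulVecLin) = 0 := by omega
    exact Submodule.finrank_eq_zero.mp h0
  have hinj : Function.Injective (Aᵀ * A).mulVecLin := LinearMap.ker_eq_bot.mp hker
  rw [← Matrix.mulVec_injective_iff_isUnit]
  exact fun x y hxy => hinj hxy

lemma annih_eq {p d : ℕ} {A : Matrix (Fin p) (Fin d) ℝ} {M : Matrix (Fin p) (Fin p) ℝ}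
    (hM : IsAnnihilator A M) (hU : IsUnit (Aᵀ * A)) :
    M = 1 - A * (Aᵀ * A)⁻¹ * Aᵀ := by
  obtain ⟨hsym, hidem, hker⟩ := hM
  have hdet : IsUnit (Aᵀ * A).det := (Matrix.isUnit_iff_isUnit_det _).mp hU
  set P : Matrix (Fin p) (Fin p) ℝ := A * (Aᵀ * A)⁻¹ * Aᵀ with hP
  have hPA : P * A = A := by
    simp only [hP, Matrix.mul_assoc]
    rw [Matrix.nonsing_inv_mul _ hdet, Matrix.mul_one]
  have hGsym : (Aᵀ * A)ᵀ = Aᵀ * A := by rw [Matrix.transpose_mul, Matrix.transpose_transpose]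
  have hPsym : Pᵀ = P := by
    simp only [hP, Matrix.transpose_mul, Matrix.transpose_nonsing_inv, hGsym,
      Matrix.transpose_transpose, Matrix.mul_assoc]
  have hMA : M * A = 0 := by
    ext i k
    have h0 : M *ᵥ (A *ᵥ Pi.single k 1) = 0 := (hker _).mpr ⟨_, rfl⟩
    have h1 := congrFun h0 i
    rw [Matrix.mulVec_mulVec] at h1
    simpa [Matrix.mulVec_single] using h1
  have hMP : M * P = 0 := by
    rw [hP, ← Matrix.mul_assoc, ← Matrix.mul_assoc, hMA, Matrix.zero_mul, Matrix.zero_mul]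
  have hPM : P * M = 0 := by
    have h2 := congrArg Matrix.transpose hMP
    simpa [Matrix.transpose_mul, hPsym, hsym] using h2
  have hPP : P * P = P := by
    nth_rewrite 2 [hP]
    rw [← Matrix.mul_assoc, ← Matrix.mul_assoc, hPA, hP]
  have key : ∀ v, M *ᵥ v = (1 - P) *ᵥ v := by
    intro v
    set u := (1 - P) *ᵥ v - M *ᵥ v with hu
    have h1 : M * (1 - P) = M := by rw [Matrix.mul_sub, Matrix.mul_one, hMP, sub_zero]
    have hMu : M *ᵥ u = 0 := by
      rw [hu, Matrix.mulVec_sub, Matrix.mulVec_mulVec, Matrix.mulVec_mulVec, h1, hidem, sub_self]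
    obtain ⟨x, hx⟩ := (hker u).mp hMu
    have h2 : (1 - P) * A = 0 := by rw [Matrix.sub_mul, Matrix.one_mul, hPA, sub_self]
    have h3 : (1 - P) *ᵥ u = 0 := by rw [← hx, Matrix.mulVec_mulVec, h2, Matrix.zero_mulVec]
    have h4 : (1 - P) * (1 - P) = 1 - P := by
      rw [Matrix.sub_mul, Matrix.one_mul, Matrix.mul_sub, Matrix.mul_one, hPP]
      simp
    have h5 : (1 - P) * M = M := by rw [Matrix.sub_mul, Matrix.one_mul, hPM, sub_zero]
    have h6 : (1 - P) *ᵥ u = u := by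
      rw [hu, Matrix.mulVec_sub, Matrix.mulVec_mulVec, Matrix.mulVec_mulVec, h4, h5]
    have hu0 : u = 0 := by rw [← h6, h3]
    have := sub_eq_zero.mp (hu.symm.trans hu0 : (1 - P) *ᵥ v - M *ᵥ v = 0)
    exact this.symm
  ext i k
  have h7 := congrFun (key (Pi.single k 1)) i
  simpa [Matrix.mulVec_single] using h7

open Filter Topology


set_option maxHeartbeats 2000000 in
/-- if `(A₀, A₁, b)` lies in the Euclidean closure of `C₀` and `rank A₀ = d₀`,
then for all `y`, `min (min_j aⱼ' M₀ y, −b' M₀ y) ≤ 0`, where `aⱼ` are the columns of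
`M₀ A₁`. -/
theorem mem_closure_C0_full_rank {p d₀ d₁ : ℕ} (hd₁ : 0 < d₁)
    (A₀ : Matrix (Fin p) (Fin d₀) ℝ) (A₁ : Matrix (Fin p) (Fin d₁) ℝ) (b : Fin p → ℝ)
    (M₀ : Matrix (Fin p) (Fin p) ℝ) (hM₀ : IsAnnihilator A₀ M₀)
    (hmem : (A₀, A₁, b) ∈
      closure {T : Matrix (Fin p) (Fin d₀) ℝ × Matrix (Fin p) (Fin d₁) ℝ × (Fin p → ℝ) |
        ∃ (x₀ : Fin d₀ → ℝ) (x₁ : Fin d₁ → ℝ), 0 ≤ x₁ ∧ T.1 *ᵥ x₀ + T.2.1 *ᵥ x₁ = T.2.2})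
    (hrank : A₀.rank = d₀) :
    ∀ y : Fin p → ℝ,
      min (⨅ j : Fin d₁, ((M₀ * A₁)ᵀ j) ⬝ᵥ (M₀ *ᵥ y)) (-(b ⬝ᵥ (M₀ *ᵥ y))) ≤ 0 := by
  intro y
  by_contra hcon
  push_neg at hcon
  rw [lt_min_iff] at hcon
  obtain ⟨hinf, hb⟩ := hcon
  haveI : Nonempty (Fin d₁) := Fin.pos_iff_nonempty.mp hd₁
  set w : Fin p → ℝ := M₀ *ᵥ y with hw
  have hU : IsUnit (A₀ᵀ * A₀) := isUnit_gram hrank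
  have hdet : IsUnit (A₀ᵀ * A₀).det := (Matrix.isUnit_iff_isUnit_det _).mp hU
  have hMeq : M₀ = 1 - A₀ * (A₀ᵀ * A₀)⁻¹ * A₀ᵀ := annih_eq hM₀ hU
  have hcoef : ∀ j, 0 < ((M₀ * A₁)ᵀ *ᵥ w) j := fun j =>
    lt_of_lt_of_le hinf (ciInf_le (Set.Finite.bddBelow (Set.finite_range _)) j)
  haveI i1 : FirstCountableTopology (Matrix (Fin p) (Fin d₀) ℝ) :=
    inferInstanceAs (FirstCountableTopology (Fin p → Fin d₀ → ℝ))
  haveI i2 : FirstCountableTopology (Matrix (Fin p) (Fin d₁) ℝ) :=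
    inferInstanceAs (FirstCountableTopology (Fin p → Fin d₁ → ℝ))
  obtain ⟨u, humem, hulim⟩ := mem_closure_iff_seq_limit.mp hmem
  have h1 : Tendsto (fun n => (u n).1) atTop (𝓝 A₀) :=
    (continuous_fst.tendsto _).comp hulim
  have h21 : Tendsto (fun n => (u n).2.1) atTop (𝓝 A₁) :=
    ((continuous_fst.comp continuous_snd).tendsto _).comp hulim
  have h22 : Tendsto (fun n => (u n).2.2) atTop (𝓝 b) :=
    ((continuous_snd.comp continuous_snd).tendsto _).comp hulim
  have hg : Tendsto (fun n => ((u n).1ᵀ * (u n).1)) atTop (𝓝 (A₀ᵀ * A₀)) := by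
    have hcont : Continuous (fun A : Matrix (Fin p) (Fin d₀) ℝ => Aᵀ * A) :=
      continuous_id.matrix_transpose.matrix_mul continuous_id
    have h := (hcont.tendsto A₀).comp h1
    exact h
  have hinvc : ContinuousAt Inv.inv (A₀ᵀ * A₀) := by
    refine continuousAt_matrix_inv _ ?_
    rw [Ring.inverse_eq_inv']
    exact continuousAt_inv₀ (isUnit_iff_ne_zero.mp hdet)
  have hinv : Tendsto (fun n => ((u n).1ᵀ * (u n).1)⁻¹) atTop (𝓝 ((A₀ᵀ * A₀)⁻¹)) :=
    hinvc.tendsto.comp hg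
  set N : ℕ → Matrix (Fin p) (Fin p) ℝ :=
    fun n => 1 - (u n).1 * ((u n).1ᵀ * (u n).1)⁻¹ * (u n).1ᵀ with hN
  have hMlim : Tendsto N atTop (𝓝 M₀) := by
    rw [hMeq]
    have hcont : Continuous (fun z : Matrix (Fin p) (Fin d₀) ℝ × Matrix (Fin d₀) (Fin d₀) ℝ =>
        (1 : Matrix (Fin p) (Fin p) ℝ) - z.1 * z.2 * z.1ᵀ) :=
      continuous_const.sub
        ((continuous_fst.matrix_mul continuous_snd).matrix_mul continuous_fst.matrix_transpose)
    have h := (hcont.tendsto (A₀, (A₀ᵀ * A₀)⁻¹)).comp (h1.prodMk_nhds hinv)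
    exact h
  have hc : Tendsto (fun n => ((N n * (u n).2.1)ᵀ *ᵥ w)) atTop (𝓝 ((M₀ * A₁)ᵀ *ᵥ w)) := by
    have hcont : Continuous (fun z : Matrix (Fin p) (Fin p) ℝ × Matrix (Fin p) (Fin d₁) ℝ =>
        (z.1 * z.2)ᵀ *ᵥ w) :=
      ((continuous_fst.matrix_mul continuous_snd).matrix_transpose).matrix_mulVec continuous_const
    have h := (hcont.tendsto (M₀, A₁)).comp (hMlim.prodMk_nhds h21)
    exact h
  have hβ : Tendsto (fun n => (N n *ᵥ (u n).2.2) ⬝ᵥ w) atTop (𝓝 ((M₀ *ᵥ b) ⬝ᵥ w)) := by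
    have hcont : Continuous (fun z : Matrix (Fin p) (Fin p) ℝ × (Fin p → ℝ) =>
        (z.1 *ᵥ z.2) ⬝ᵥ w) :=
      (continuous_fst.matrix_mulVec continuous_snd).dotProduct continuous_const
    have h := (hcont.tendsto (M₀, b)).comp (hMlim.prodMk_nhds h22)
    exact h
  have hMw : M₀ *ᵥ w = w := by rw [hw, Matrix.mulVec_mulVec, hM₀.2.1]
  have hbw : (M₀ *ᵥ b) ⬝ᵥ w < 0 := by
    have heqd : (M₀ *ᵥ b) ⬝ᵥ w = b ⬝ᵥ w := by
      calc (M₀ *ᵥ b) ⬝ᵥ w = w ⬝ᵥ (M₀ *ᵥ b) := dotProduct_comm _ _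
      _ = (w ᵥ* M₀) ⬝ᵥ b := dotProduct_mulVec _ _ _
      _ = (M₀ᵀ *ᵥ w) ⬝ᵥ b := by rw [Matrix.mulVec_transpose]
      _ = w ⬝ᵥ b := by rw [hM₀.1, hMw]
      _ = b ⬝ᵥ w := dotProduct_comm _ _
    rw [heqd]
    linarith [hb]
  have hev1 : ∀ᶠ n in atTop, ∀ j, 0 < ((N n * (u n).2.1)ᵀ *ᵥ w) j := by
    rw [eventually_all]
    intro j
    exact (tendsto_pi_nhds.mp hc j).eventually (eventually_gt_nhds (hcoef j))
  have hev2 : ∀ᶠ n in atTop, (N n *ᵥ (u n).2.2) ⬝ᵥ w < 0 :=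
    hβ.eventually (eventually_lt_nhds hbw)
  have hev3 : ∀ᶠ n in atTop, IsUnit ((u n).1ᵀ * (u n).1).det := by
    have hgd : Tendsto (fun n => ((u n).1ᵀ * (u n).1).det) atTop (𝓝 (A₀ᵀ * A₀).det) :=
      (continuous_id.matrix_det.tendsto _).comp hg
    filter_upwards [hgd.eventually_ne (isUnit_iff_ne_zero.mp hdet)] with n hn
    exact isUnit_iff_ne_zero.mpr hn
  obtain ⟨n, hpos, hneg, hdetn⟩ := (hev1.and (hev2.and hev3)).exists
  obtain ⟨x₀, x₁, hx₁, heq⟩ := humem n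
  have hNA : N n * (u n).1 = 0 := by
    simp only [hN, Matrix.sub_mul, Matrix.one_mul, Matrix.mul_assoc]
    rw [Matrix.nonsing_inv_mul _ hdetn, Matrix.mul_one, sub_self]
  have hkey : N n *ᵥ (u n).2.2 = (N n * (u n).2.1) *ᵥ x₁ := by
    rw [← heq, Matrix.mulVec_add, Matrix.mulVec_mulVec, hNA, Matrix.zero_mulVec, zero_add,
      Matrix.mulVec_mulVec]
  have hsum : (N n *ᵥ (u n).2.2) ⬝ᵥ w = x₁ ⬝ᵥ ((N n * (u n).2.1)ᵀ *ᵥ w) := by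
    rw [hkey]
    calc ((N n * (u n).2.1) *ᵥ x₁) ⬝ᵥ w = w ⬝ᵥ ((N n * (u n).2.1) *ᵥ x₁) := dotProduct_comm _ _
    _ = (w ᵥ* (N n * (u n).2.1)) ⬝ᵥ x₁ := dotProduct_mulVec _ _ _
    _ = ((N n * (u n).2.1)ᵀ *ᵥ w) ⬝ᵥ x₁ := by rw [Matrix.mulVec_transpose]
    _ = x₁ ⬝ᵥ ((N n * (u n).2.1)ᵀ *ᵥ w) := dotProduct_comm _ _
  have hnonneg : 0 ≤ x₁ ⬝ᵥ ((N n * (u n).2.1)ᵀ *ᵥ w) := by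
    refine Finset.sum_nonneg fun j _ => ?_
    exact mul_nonneg (hx₁ j) (le_of_lt (hpos j))
  rw [hsum] at hneg
  linarith [hneg]
end

section
/- Let C^{RD} = {(A₀, A₁, b) ∈ ℝ^{p×d₀}×ℝ^{p×d₁}×ℝᵖ : rank(A₀) < d₀} and C₀ = {(A₀, A₁, b) : A₀x₀ + A₁x₁ = b for some x₀ ∈ ℝ^{d₀}, x₁ ∈ ℝ^{d₁} with x₁ ≥ 0}. Then C^{RD} is contained in the Euclidean closure of C₀; i.e., any triple whose first matrix is rank-deficient can be approximated arbitrarily well by triples admitting a feasible solution. -/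
open Matrix

/-- the set of triples with rank-deficient `A₀` is contained in the Euclidean
closure of the feasible set `C₀`. -/
theorem rankDeficient_subset_closure_C0 {p d₀ d₁ : ℕ} :
    {T : Matrix (Fin p) (Fin d₀) ℝ × Matrix (Fin p) (Fin d₁) ℝ × (Fin p → ℝ) |
        T.1.rank < d₀} ⊆
      closure {T : Matrix (Fin p) (Fin d₀) ℝ × Matrix (Fin p) (Fin d₁) ℝ × (Fin p → ℝ) |
        ∃ (x₀ : Fin d₀ → ℝ) (x₁ : Fin d₁ → ℝ), 0 ≤ x₁ ∧ T.1 *ᵥ x₀ + T.2.1 *ᵥ x₁ = T.2.2} := by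
  rintro ⟨A₀, A₁, b⟩ hT
  simp only [Set.mem_setOf_eq] at hT
  -- extract a nonzero kernel vector c of A₀
  have hker : LinearMap.ker A₀.mulVecLin ≠ ⊥ := by
    intro h
    have := LinearMap.finrank_range_add_finrank_ker A₀.mulVecLin
    rw [h, finrank_bot, add_zero] at this
    rw [Matrix.rank, this] at hT
    simp at hT
  obtain ⟨c, hc, hc0⟩ := Submodule.ne_bot_iff _ |>.mp hker
  have hAc : A₀ *ᵥ c = 0 := hc
  set s : ℝ := ∑ j, c j ^ 2 with hs
  have hspos : 0 < s := by
    have : ∃ j, c j ≠ 0 := by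
      by_contra h
      push_neg at h
      exact hc0 (funext h)
    obtain ⟨j, hj⟩ := this
    exact Finset.sum_pos' (fun i _ => sq_nonneg _)
      ⟨j, Finset.mem_univ j, by positivity⟩
  -- the rank-one perturbation matrix
  set M : Matrix (Fin p) (Fin d₀) ℝ := fun i j => b i * c j with hM
  have hMc : M *ᵥ c = s • b := by
    funext i
    simp only [Matrix.mulVec, dotProduct, hM, Pi.smul_apply, smul_eq_mul, hs,
      Finset.sum_mul]
    exact Finset.sum_congr rfl (fun j _ => by ring)
  -- the approximating sequence
  set f : ℕ → Matrix (Fin p) (Fin d₀) ℝ × Matrix (Fin p) (Fin d₁) ℝ × (Fin p → ℝ) :=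
    fun n => (A₀ + (1 / (n + 1) : ℝ) • M, A₁, b) with hf
  have htend : Filter.Tendsto f Filter.atTop (nhds (A₀, A₁, b)) := by
    have h1 : Filter.Tendsto (fun n : ℕ => A₀ + (1 / (n + 1) : ℝ) • M)
        Filter.atTop (nhds A₀) := by
      have := (tendsto_one_div_add_atTop_nhds_zero_nat :
        Filter.Tendsto (fun n : ℕ => 1 / ((n : ℝ) + 1)) Filter.atTop (nhds 0)).smul_const M
      have h2 := Filter.Tendsto.const_add A₀ this
      simpa using h2
    exact h1.prodMk_nhds (tendsto_const_nhds.prodMk_nhds tendsto_const_nhds)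
  refine mem_closure_of_tendsto htend (Filter.Eventually.of_forall fun n => ?_)
  -- feasibility of each term of the sequence
  have hε : (1 / (n + 1) : ℝ) ≠ 0 := by positivity
  refine ⟨((n + 1 : ℝ) / s) • c, 0, le_refl _, ?_⟩
  simp only [hf, Matrix.mulVec_zero, add_zero]
  rw [Matrix.mulVec_smul, Matrix.add_mulVec, hAc, zero_add, Matrix.smul_mulVec, hMc,
    smul_smul, smul_smul]
  have hcoef : ((n + 1 : ℝ) / s) * (1 / (n + 1 : ℝ)) * s = 1 := by
    field_simp
  rw [hcoef, one_smul]
end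

section
/- Let A₀ ∈ ℝ^{p×d₀}, A₁ ∈ ℝ^{p×d₁}, b ∈ ℝᵖ, M₀ the annihilator of A₀, and suppose the cone {M₀A₁x₁ : x₁ ≥ 0} is NOT pointed. Then (A₀, A₁, b) lies in the Euclidean closure of C₀ = {(A₀, A₁, b) : A₀x₀ + A₁x₁ = b for some x₀, x₁ ≥ 0}. -/
open Matrix

/-- if the cone `{M₀ A₁ x₁ : x₁ ≥ 0}` is not pointed, then `(A₀, A₁, b)` lies
in the Euclidean closure of the feasible set `C₀`. -/
theorem mem_closure_C0_of_not_pointed {p d₀ d₁ : ℕ}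
    (A₀ : Matrix (Fin p) (Fin d₀) ℝ) (A₁ : Matrix (Fin p) (Fin d₁) ℝ) (b : Fin p → ℝ)
    (M₀ : Matrix (Fin p) (Fin p) ℝ) (hM₀ : IsAnnihilator A₀ M₀)
    (hnotpointed : ¬ ({v : Fin p → ℝ | ∃ x₁ : Fin d₁ → ℝ, 0 ≤ x₁ ∧ (M₀ * A₁) *ᵥ x₁ = v} ∩
        (-{v : Fin p → ℝ | ∃ x₁ : Fin d₁ → ℝ, 0 ≤ x₁ ∧ (M₀ * A₁) *ᵥ x₁ = v}) = {0})) :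
    (A₀, A₁, b) ∈
      closure {T : Matrix (Fin p) (Fin d₀) ℝ × Matrix (Fin p) (Fin d₁) ℝ × (Fin p → ℝ) |
        ∃ (x₀ : Fin d₀ → ℝ) (x₁ : Fin d₁ → ℝ), 0 ≤ x₁ ∧ T.1 *ᵥ x₀ + T.2.1 *ᵥ x₁ = T.2.2} := by
  obtain ⟨hMt, hMM, hMker⟩ := hM₀
  set S : Set (Fin p → ℝ) :=
    {v : Fin p → ℝ | ∃ x₁ : Fin d₁ → ℝ, 0 ≤ x₁ ∧ (M₀ * A₁) *ᵥ x₁ = v} with hS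
  -- 0 is always in the cone and its negation
  have h0S : (0 : Fin p → ℝ) ∈ S := ⟨0, le_refl 0, by simp⟩
  have hsub : ({0} : Set (Fin p → ℝ)) ⊆ S ∩ (-S) := by
    rw [Set.singleton_subset_iff]
    exact ⟨h0S, by simpa [Set.mem_neg] using h0S⟩
  obtain ⟨v, hvmem, hv0⟩ :=
    Set.exists_of_ssubset (hsub.ssubset_of_ne (fun h => hnotpointed h.symm))
  have hv0 : v ≠ 0 := by simpa using hv0
  obtain ⟨x, hx0, hxv⟩ := hvmem.1
  obtain ⟨y, hy0, hyv⟩ : -v ∈ S := Set.mem_neg.mp hvmem.2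
  set l : Fin d₁ → ℝ := x + y with hl
  have hl0 : 0 ≤ l := by intro k; exact add_nonneg (hx0 k) (hy0 k)
  have hlker : (M₀ * A₁) *ᵥ l = 0 := by
    rw [hl, mulVec_add, hxv, hyv]; simp
  have hlne : l ≠ 0 := by
    intro h
    apply hv0
    have hx : x = 0 := by
      funext k
      have h1 : x k + y k = 0 := by simpa [hl] using congrFun h k
      have h2 : (0:ℝ) ≤ x k := by simpa using hx0 k
      have h3 : (0:ℝ) ≤ y k := by simpa using hy0 k
      simpa using (by linarith : x k = 0)
    rw [← hxv, hx]; simp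
  obtain ⟨j, hj⟩ : ∃ j, 0 < l j := by
    by_contra h
    push_neg at h
    exact hlne (funext fun k => le_antisymm (h k) (hl0 k))
  -- the perturbation direction
  set u : Fin p → ℝ := M₀ *ᵥ b with hu
  set E : Matrix (Fin p) (Fin d₁) ℝ := Matrix.of (fun i k => if k = j then u i else 0) with hE
  have hEmul : ∀ z : Fin d₁ → ℝ, E *ᵥ z = z j • u := by
    intro z
    funext i
    simp [hE, Matrix.mulVec, dotProduct, ite_mul, Finset.sum_ite_eq', mul_comm]
  -- key kernel facts
  have hMu : M₀ *ᵥ u = u := by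
    rw [hu, Matrix.mulVec_mulVec, hMM]
  have hMAl : M₀ *ᵥ (A₁ *ᵥ l) = 0 := by
    rw [Matrix.mulVec_mulVec, hlker]
  refine mem_closure_of_tendsto (f := fun n : ℕ => (A₀, A₁ + (1 / (n + 1 : ℝ)) • E, b))
    (b := Filter.atTop) ?_ (Filter.Eventually.of_forall fun n => ?_)
  · -- convergence
    have hε0 : Filter.Tendsto (fun n : ℕ => (1 / (n + 1 : ℝ))) Filter.atTop (nhds 0) :=
      tendsto_one_div_add_atTop_nhds_zero_nat
    have hA : Filter.Tendsto (fun n : ℕ => A₁ + (1 / (n + 1 : ℝ)) • E)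
        Filter.atTop (nhds A₁) := by
      have := (hε0.smul_const E)
      simpa using tendsto_const_nhds.add this
    exact tendsto_const_nhds.prodMk_nhds (hA.prodMk_nhds tendsto_const_nhds)
  · -- feasibility of the perturbed problem
    set ε : ℝ := 1 / (n + 1 : ℝ) with hε
    have hεpos : 0 < ε := by positivity
    set t : ℝ := (n + 1 : ℝ) / l j with ht
    have htpos : 0 < t := by positivity
    have htεj : ε * (t * l j) = 1 := by
      have hlj : l j ≠ 0 := hj.ne'
      rw [ht, hε]; field_simp
    have hker : M₀ *ᵥ (b - u - t • (A₁ *ᵥ l)) = 0 := by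
      rw [Matrix.mulVec_sub, Matrix.mulVec_sub, Matrix.mulVec_smul, hMu, hMAl]
      simp [hu]
    obtain ⟨x₀, hx₀⟩ := (hMker _).mp hker
    refine ⟨x₀, t • l, smul_nonneg htpos.le hl0, ?_⟩
    simp only
    rw [Matrix.add_mulVec, Matrix.smul_mulVec, hEmul, hx₀, Matrix.mulVec_smul]
    have : (t • l) j = t * l j := rfl
    rw [this, smul_smul, htεj]
    funext i
    simp
    ring
end

section
/- Let Σ be a k×k symmetric positive semi-definite real matrix and let μₙ → μ in ℝᵏ with μₙ − μ ∈ range(Σ) for all n. Then the total variation distance between the Gaussian measures N(μₙ, Σ) and N(μ, Σ) converges to 0 as n → ∞. -/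
open Matrix MeasureTheory ProbabilityTheory Filter
open scoped ENNReal NNReal Real Topology

/-- Total variation distance between two measures: the supremum over measurable sets of the
absolute difference of the measures. -/
noncomputable def tvDist {α : Type*} [MeasurableSpace α] (P Q : Measure α) : ℝ :=
  ⨆ s : {s : Set α // MeasurableSet s}, |(P s).toReal - (Q s).toReal|

/-- The Gaussian measure `N(m, B Bᵀ)` on `ℝᵏ`, realized as the law of `m + B Z` where `Z` is a
standard Gaussian vector. -/
noncomputable def gaussianPi {k : ℕ} (m : Fin k → ℝ) (B : Matrix (Fin k) (Fin k) ℝ) :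
    Measure (Fin k → ℝ) :=
  Measure.map (fun x => m + B *ᵥ x) (Measure.pi fun _ => gaussianReal 0 1)


noncomputable def gDist (a : ℝ) : ℝ :=
  ∫ x, |gaussianPDFReal a 1 x - gaussianPDFReal 0 1 x|

lemma integrable_gdiff (a : ℝ) :
    Integrable (fun x => |gaussianPDFReal a 1 x - gaussianPDFReal 0 1 x|) :=
  ((integrable_gaussianPDFReal a 1).sub (integrable_gaussianPDFReal 0 1)).abs

lemma gDist_bound (a : ℝ) (s : Set ℝ) :
    |((gaussianReal a 1) s).toReal - ((gaussianReal 0 1) s).toReal| ≤ gDist a := by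
  have h1 : (1 : ℝ≥0) ≠ 0 := one_ne_zero
  rw [gaussianReal_apply_eq_integral _ h1 s, gaussianReal_apply_eq_integral _ h1 s,
    ENNReal.toReal_ofReal (integral_nonneg fun x => gaussianPDFReal_nonneg _ _ _),
    ENNReal.toReal_ofReal (integral_nonneg fun x => gaussianPDFReal_nonneg _ _ _),
    ← integral_sub ((integrable_gaussianPDFReal a 1).restrict)
      ((integrable_gaussianPDFReal 0 1).restrict)]
  calc |∫ x in s, (gaussianPDFReal a 1 x - gaussianPDFReal 0 1 x)|
      ≤ ∫ x in s, |gaussianPDFReal a 1 x - gaussianPDFReal 0 1 x| := by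
        simpa [Real.norm_eq_abs] using
          norm_integral_le_integral_norm (μ := volume.restrict s)
            (fun x => gaussianPDFReal a 1 x - gaussianPDFReal 0 1 x)
    _ ≤ gDist a := setIntegral_le_integral (integrable_gdiff a)
        (ae_of_all _ fun x => abs_nonneg _)

lemma gauss_pdf_le (a x : ℝ) (ha : |a| ≤ 1) :
    gaussianPDFReal a 1 x ≤ (√(2 * π))⁻¹ * Real.exp 1 * Real.exp (-(1/4) * x ^ 2) := by
  rw [gaussianPDFReal]
  have hx : |x| ≤ x ^ 2 / 4 + 1 := by nlinarith [sq_nonneg (|x| - 2), sq_abs x]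
  have hax : a * x ≤ |x| := by
    calc a * x ≤ |a * x| := le_abs_self _
      _ = |a| * |x| := abs_mul a x
      _ ≤ 1 * |x| := mul_le_mul_of_nonneg_right ha (abs_nonneg x)
      _ = |x| := one_mul _
  have hexp : Real.exp (-(x - a) ^ 2 / (2 * ((1:ℝ≥0) : ℝ))) ≤
      Real.exp (1 + -(1/4) * x ^ 2) := by
    apply Real.exp_le_exp.mpr
    push_cast
    nlinarith [sq_nonneg a]
  calc (√(2 * π * ((1:ℝ≥0) : ℝ)))⁻¹ * Real.exp (-(x - a) ^ 2 / (2 * ((1:ℝ≥0) : ℝ)))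
      ≤ (√(2 * π * ((1:ℝ≥0) : ℝ)))⁻¹ * Real.exp (1 + -(1/4) * x ^ 2) :=
        mul_le_mul_of_nonneg_left hexp (by positivity)
      _ = (√(2 * π))⁻¹ * Real.exp 1 * Real.exp (-(1/4) * x ^ 2) := by
        rw [Real.exp_add]; push_cast; ring_nf

lemma gDist_tendsto {u : ℕ → ℝ} (hu : Tendsto u atTop (𝓝 0)) :
    Tendsto (fun n => gDist (u n)) atTop (𝓝 0) := by
  have h0 : (0 : ℝ) = ∫ (_ : ℝ), (0 : ℝ) := by simp
  rw [h0]
  refine tendsto_integral_filter_of_dominated_convergence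
    (fun x => 2 * ((√(2 * π))⁻¹ * Real.exp 1 * Real.exp (-(1/4) * x ^ 2))) ?_ ?_ ?_ ?_
  · exact Eventually.of_forall fun n =>
      ((measurable_gaussianPDFReal _ _).sub (measurable_gaussianPDFReal _ _)).abs.aestronglyMeasurable
  · have hev : ∀ᶠ n in atTop, |u n| ≤ 1 := by
      have := Metric.tendsto_nhds.mp hu 1 one_pos
      filter_upwards [this] with n hn
      simpa [Real.dist_eq] using hn.le
    filter_upwards [hev] with n hn
    refine ae_of_all _ fun x => ?_
    have h1 := gauss_pdf_le (u n) x hn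
    have h2 := gauss_pdf_le 0 x (by simp)
    have hnn1 := gaussianPDFReal_nonneg (u n) 1 x
    have hnn0 := gaussianPDFReal_nonneg 0 1 x
    rw [Real.norm_eq_abs, abs_abs]
    calc |gaussianPDFReal (u n) 1 x - gaussianPDFReal 0 1 x|
        ≤ |gaussianPDFReal (u n) 1 x| + |gaussianPDFReal 0 1 x| := abs_sub _ _
      _ = gaussianPDFReal (u n) 1 x + gaussianPDFReal 0 1 x := by
          rw [abs_of_nonneg hnn1, abs_of_nonneg hnn0]
      _ ≤ 2 * ((√(2 * π))⁻¹ * Real.exp 1 * Real.exp (-(1/4) * x ^ 2)) := by linarith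
  · have : Integrable (fun x : ℝ => Real.exp (-(1/4) * x ^ 2)) :=
      integrable_exp_neg_mul_sq (by norm_num)
    have h := (this.const_mul ((√(2 * π))⁻¹ * Real.exp 1)).const_mul 2
    refine h.congr (ae_of_all _ fun x => by ring)
  · refine ae_of_all _ fun x => ?_
    have hc : Continuous (fun a : ℝ => gaussianPDFReal a 1 x) := by
      simp only [gaussianPDFReal]
      fun_prop
    have h1 : Tendsto (fun n => gaussianPDFReal (u n) 1 x) atTop (𝓝 (gaussianPDFReal 0 1 x)) :=
      (hc.tendsto 0).comp hu
    have := (h1.sub (tendsto_const_nhds (x := gaussianPDFReal 0 1 x))).abs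
    simpa using this


section ProdPi

variable {α β : Type*} [MeasurableSpace α] [MeasurableSpace β]

lemma prod_left_bound (P : Measure α) (Q₁ Q₂ : Measure β)
    [IsProbabilityMeasure P] [IsProbabilityMeasure Q₁] [IsProbabilityMeasure Q₂]
    {b : ℝ} (hQ : ∀ t : Set β, MeasurableSet t → |(Q₁ t).toReal - (Q₂ t).toReal| ≤ b)
    {S : Set (α × β)} (hS : MeasurableSet S) :
    |((P.prod Q₁) S).toReal - ((P.prod Q₂) S).toReal| ≤ b := by
  rw [Measure.prod_apply hS, Measure.prod_apply hS,
    integral_toReal (measurable_measure_prodMk_left hS).aemeasurable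
      (ae_of_all _ fun x => measure_lt_top _ _) |>.symm,
    integral_toReal (measurable_measure_prodMk_left hS).aemeasurable
      (ae_of_all _ fun x => measure_lt_top _ _) |>.symm]
  have hm1 : Measurable fun x => (Q₁ (Prod.mk x ⁻¹' S)).toReal :=
    (measurable_measure_prodMk_left hS).ennreal_toReal
  have hm2 : Measurable fun x => (Q₂ (Prod.mk x ⁻¹' S)).toReal :=
    (measurable_measure_prodMk_left hS).ennreal_toReal
  have hint : ∀ (Q : Measure β) [IsProbabilityMeasure Q],
      Measurable (fun x => (Q (Prod.mk x ⁻¹' S)).toReal) →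
      Integrable (fun x => (Q (Prod.mk x ⁻¹' S)).toReal) P := by
    intro Q _ hm
    refine (integrable_const 1).mono' hm.aestronglyMeasurable (ae_of_all _ fun x => ?_)
    rw [Real.norm_eq_abs, abs_of_nonneg ENNReal.toReal_nonneg]
    exact ENNReal.toReal_le_of_le_ofReal one_pos.le (by simpa using prob_le_one)
  have hi1 := hint Q₁ hm1
  have hi2 := hint Q₂ hm2
  rw [← integral_sub hi1 hi2]
  calc |∫ x, ((Q₁ (Prod.mk x ⁻¹' S)).toReal - (Q₂ (Prod.mk x ⁻¹' S)).toReal) ∂P|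
      ≤ ∫ x, |(Q₁ (Prod.mk x ⁻¹' S)).toReal - (Q₂ (Prod.mk x ⁻¹' S)).toReal| ∂P := by
        simpa [Real.norm_eq_abs] using norm_integral_le_integral_norm (μ := P)
          (fun x => (Q₁ (Prod.mk x ⁻¹' S)).toReal - (Q₂ (Prod.mk x ⁻¹' S)).toReal)
    _ ≤ ∫ _, b ∂P := by
        refine integral_mono (hi1.sub hi2).abs (integrable_const b) fun x => ?_
        exact hQ _ (hS.preimage measurable_prodMk_left)
    _ = b := by simp

lemma prod_right_bound (P₁ P₂ : Measure α) (Q : Measure β)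
    [IsProbabilityMeasure P₁] [IsProbabilityMeasure P₂] [IsProbabilityMeasure Q]
    {a : ℝ} (hP : ∀ s : Set α, MeasurableSet s → |(P₁ s).toReal - (P₂ s).toReal| ≤ a)
    {S : Set (α × β)} (hS : MeasurableSet S) :
    |((P₁.prod Q) S).toReal - ((P₂.prod Q) S).toReal| ≤ a := by
  rw [Measure.prod_apply_symm hS, Measure.prod_apply_symm hS,
    integral_toReal (measurable_measure_prodMk_right hS).aemeasurable
      (ae_of_all _ fun x => measure_lt_top _ _) |>.symm,
    integral_toReal (measurable_measure_prodMk_right hS).aemeasurable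
      (ae_of_all _ fun x => measure_lt_top _ _) |>.symm]
  have hm1 : Measurable fun y => (P₁ ((fun x => (x, y)) ⁻¹' S)).toReal :=
    (measurable_measure_prodMk_right hS).ennreal_toReal
  have hm2 : Measurable fun y => (P₂ ((fun x => (x, y)) ⁻¹' S)).toReal :=
    (measurable_measure_prodMk_right hS).ennreal_toReal
  have hint : ∀ (R : Measure α) [IsProbabilityMeasure R],
      Measurable (fun y => (R ((fun x => (x, y)) ⁻¹' S)).toReal) →
      Integrable (fun y => (R ((fun x => (x, y)) ⁻¹' S)).toReal) Q := by
    intro R _ hm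
    refine (integrable_const 1).mono' hm.aestronglyMeasurable (ae_of_all _ fun y => ?_)
    rw [Real.norm_eq_abs, abs_of_nonneg ENNReal.toReal_nonneg]
    exact ENNReal.toReal_le_of_le_ofReal one_pos.le (by simpa using prob_le_one)
  have hi1 := hint P₁ hm1
  have hi2 := hint P₂ hm2
  rw [← integral_sub hi1 hi2]
  calc |∫ y, ((P₁ ((fun x => (x, y)) ⁻¹' S)).toReal - (P₂ ((fun x => (x, y)) ⁻¹' S)).toReal) ∂Q|
      ≤ ∫ y, |(P₁ ((fun x => (x, y)) ⁻¹' S)).toReal - (P₂ ((fun x => (x, y)) ⁻¹' S)).toReal| ∂Q := by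
        simpa [Real.norm_eq_abs] using norm_integral_le_integral_norm (μ := Q)
          (fun y => (P₁ ((fun x => (x, y)) ⁻¹' S)).toReal - (P₂ ((fun x => (x, y)) ⁻¹' S)).toReal)
    _ ≤ ∫ _, a ∂Q := by
        refine integral_mono (hi1.sub hi2).abs (integrable_const a) fun y => ?_
        exact hP _ (hS.preimage measurable_prodMk_right)
    _ = a := by simp

lemma prod_bound (P₁ P₂ : Measure α) (Q₁ Q₂ : Measure β)
    [IsProbabilityMeasure P₁] [IsProbabilityMeasure P₂]
    [IsProbabilityMeasure Q₁] [IsProbabilityMeasure Q₂] {a b : ℝ}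
    (hP : ∀ s : Set α, MeasurableSet s → |(P₁ s).toReal - (P₂ s).toReal| ≤ a)
    (hQ : ∀ t : Set β, MeasurableSet t → |(Q₁ t).toReal - (Q₂ t).toReal| ≤ b)
    {S : Set (α × β)} (hS : MeasurableSet S) :
    |((P₁.prod Q₁) S).toReal - ((P₂.prod Q₂) S).toReal| ≤ a + b := by
  calc |((P₁.prod Q₁) S).toReal - ((P₂.prod Q₂) S).toReal|
      ≤ |((P₁.prod Q₁) S).toReal - ((P₁.prod Q₂) S).toReal|
        + |((P₁.prod Q₂) S).toReal - ((P₂.prod Q₂) S).toReal| := abs_sub_le _ _ _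
    _ ≤ b + a := add_le_add (prod_left_bound P₁ Q₁ Q₂ hQ hS) (prod_right_bound P₁ P₂ Q₂ hP hS)
    _ = a + b := add_comm _ _

lemma pi_bound : ∀ (n : ℕ) (P Q : Fin n → Measure ℝ),
    (∀ i, IsProbabilityMeasure (P i)) → (∀ i, IsProbabilityMeasure (Q i)) →
    ∀ (δ : Fin n → ℝ),
    (∀ i (s : Set ℝ), MeasurableSet s → |(P i s).toReal - (Q i s).toReal| ≤ δ i) →
    ∀ S : Set (Fin n → ℝ), MeasurableSet S →
    |((Measure.pi P) S).toReal - ((Measure.pi Q) S).toReal| ≤ ∑ i, δ i := by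
  intro n
  induction n with
  | zero =>
    intro P Q hP hQ δ h S hS
    haveI := hP; haveI := hQ
    have hPQ : (Measure.pi P) S = (Measure.pi Q) S := by
      rcases S.eq_empty_or_nonempty with rfl | hne
      · simp
      · have hU : S = Set.univ := by
          ext x
          simp only [Set.mem_univ, iff_true]
          obtain ⟨y, hy⟩ := hne
          have hxy : x = y := Subsingleton.elim x y
          rwa [hxy]
        rw [hU, measure_univ, measure_univ]
    simp [hPQ]
  | succ n ih =>
    intro P Q hP hQ δ h S hS
    haveI := hP; haveI := hQ
    set e := MeasurableEquiv.piFinSuccAbove (fun _ : Fin (n + 1) => ℝ) 0 with he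
    have hSm : MeasurableSet (e.symm ⁻¹' S) := e.symm.measurable hS
    have key : ∀ (R : Fin (n + 1) → Measure ℝ), (∀ i, IsProbabilityMeasure (R i)) →
        Measure.pi R S
          = ((R 0).prod (Measure.pi fun j => R ((0 : Fin (n + 1)).succAbove j)))
              (e.symm ⁻¹' S) := by
      intro R hR
      haveI := hR
      rw [← (measurePreserving_piFinSuccAbove R 0).map_eq, Measure.map_apply e.measurable hSm]
      congr 1
      ext x
      simp [Set.preimage_preimage]
    rw [key P hP, key Q hQ, Fin.sum_univ_succAbove δ 0]
    exact prod_bound (P 0) (Q 0) _ _ (h 0)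
      (ih _ _ (fun j => hP _) (fun j => hQ _) _ (fun j => h _) ) hSm
  
end ProdPi


lemma pi_gaussian_shift {k : ℕ} (w : Fin k → ℝ) :
    Measure.map (fun x => x + w) (Measure.pi fun _ : Fin k => gaussianReal 0 1)
      = Measure.pi fun i => gaussianReal (w i) 1 := by
  have hadd : Measurable (fun x : Fin k → ℝ => x + w) :=
    measurable_pi_lambda _ fun i => show Measurable fun x : Fin k → ℝ => x i + w i from
      by fun_prop
  refine (Measure.pi_eq fun s hs => ?_).symm
  rw [Measure.map_apply hadd (MeasurableSet.univ_pi hs)]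
  have hpre : (fun x : Fin k → ℝ => x + w) ⁻¹' (Set.pi Set.univ s)
      = Set.pi Set.univ (fun i => (· + w i) ⁻¹' s i) := by
    ext x
    simp [Set.mem_pi]
  rw [hpre, Measure.pi_pi]
  refine Finset.prod_congr rfl fun i _ => ?_
  have hmap := gaussianReal_map_add_const (μ := 0) (v := 1) (w i)
  rw [zero_add] at hmap
  rw [← hmap, Measure.map_apply (measurable_add_const _) (hs i)]

lemma exists_w {k : ℕ} (S B : Matrix (Fin k) (Fin k) ℝ) (hB : B * Bᵀ = S)
    (μseq : ℕ → Fin k → ℝ) (μ : Fin k → ℝ) (hconv : Tendsto μseq atTop (𝓝 μ))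
    (hrange : ∀ n, ∃ v, S *ᵥ v = μseq n - μ) :
    ∃ w : ℕ → Fin k → ℝ, Tendsto w atTop (𝓝 0) ∧ ∀ n, B *ᵥ w n = μseq n - μ := by
  set f := Matrix.mulVecLin B with hf
  obtain ⟨g, hg⟩ := f.rangeRestrict.exists_rightInverse_of_surjective
    (LinearMap.range_eq_top.2 f.surjective_rangeRestrict)
  have hmem : ∀ n, μseq n - μ ∈ LinearMap.range f := by
    intro n
    obtain ⟨v, hv⟩ := hrange n
    refine ⟨Bᵀ *ᵥ v, ?_⟩
    rw [hf, Matrix.mulVecLin_apply, Matrix.mulVec_mulVec, hB, hv]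
  refine ⟨fun n => g ⟨μseq n - μ, hmem n⟩, ?_, ?_⟩
  · have hgc : Continuous g := g.continuous_of_finiteDimensional
    have h0 : Tendsto (fun n => (⟨μseq n - μ, hmem n⟩ : LinearMap.range f)) atTop
        (𝓝 ⟨0, zero_mem _⟩) := by
      rw [tendsto_subtype_rng]
      have := hconv.sub (tendsto_const_nhds (x := μ))
      simpa using this
    have h1 := (hgc.tendsto _).comp h0
    have h2 : g ⟨0, zero_mem _⟩ = 0 := by
      have : (⟨0, zero_mem _⟩ : LinearMap.range f) = 0 := rfl
      rw [this, map_zero]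
    rw [h2] at h1
    exact h1
  · intro n
    have hcon := LinearMap.congr_fun hg ⟨μseq n - μ, hmem n⟩
    have := congrArg Subtype.val hcon
    simpa [hf, Matrix.mulVecLin_apply] using this


/-- if `Σ = B Bᵀ` is positive semi-definite, `μₙ → μ` and `μₙ − μ ∈ range Σ` for
all `n`, then the total variation distance between `N(μₙ, Σ)` and `N(μ, Σ)` tends to `0`. -/
theorem gaussian_tv_tendsto_zero {k : ℕ}
    (S B : Matrix (Fin k) (Fin k) ℝ) (hS : S.PosSemidef) (hB : B * Bᵀ = S)
    (μseq : ℕ → (Fin k → ℝ)) (μ : Fin k → ℝ)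
    (hconv : Tendsto μseq atTop (nhds μ))
    (hrange : ∀ n : ℕ, ∃ v : Fin k → ℝ, S *ᵥ v = μseq n - μ) :
    Tendsto (fun n => tvDist (gaussianPi (μseq n) B) (gaussianPi μ B)) atTop (nhds 0) := by
  obtain ⟨w, hw0, hwB⟩ := exists_w S B hB μseq μ hconv hrange
  have hFmeas : Measurable (fun x : Fin k → ℝ => μ + B *ᵥ x) := by
    have hmv : Measurable (fun x : Fin k → ℝ => B *ᵥ x) :=
      (Matrix.mulVecLin B).continuous_of_finiteDimensional.measurable
    exact hmv.const_add μ
  have haddm : ∀ n, Measurable (fun x : Fin k → ℝ => x + w n) := fun n =>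
    measurable_pi_lambda _ fun i => show Measurable fun x : Fin k → ℝ => x i + w n i from
      by fun_prop
  have key : ∀ n, gaussianPi (μseq n) B
      = Measure.map (fun x => μ + B *ᵥ x) (Measure.pi fun i => gaussianReal (w n i) 1) := by
    intro n
    rw [← pi_gaussian_shift (w n), Measure.map_map hFmeas (haddm n), gaussianPi]
    congr 1
    funext x
    show μseq n + B *ᵥ x = μ + B *ᵥ (x + w n)
    rw [Matrix.mulVec_add, hwB n]
    abel
  have hsetb : ∀ n (s : Set (Fin k → ℝ)), MeasurableSet s →
      |((gaussianPi (μseq n) B) s).toReal - ((gaussianPi μ B) s).toReal|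
        ≤ ∑ i, gDist (w n i) := by
    intro n s hs
    rw [key n, gaussianPi, Measure.map_apply hFmeas hs, Measure.map_apply hFmeas hs]
    exact pi_bound k _ _ (fun i => inferInstance) (fun i => inferInstance)
      (fun i => gDist (w n i)) (fun i t _ => gDist_bound (w n i) t) _ (hFmeas hs)
  haveI : Nonempty {s : Set (Fin k → ℝ) // MeasurableSet s} := ⟨⟨∅, MeasurableSet.empty⟩⟩
  have htv_le : ∀ n, tvDist (gaussianPi (μseq n) B) (gaussianPi μ B) ≤ ∑ i, gDist (w n i) :=
    fun n => ciSup_le fun s => hsetb n s.1 s.2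
  have htv_nonneg : ∀ n, 0 ≤ tvDist (gaussianPi (μseq n) B) (gaussianPi μ B) := by
    intro n
    have hb : BddAbove (Set.range fun s : {s : Set (Fin k → ℝ) // MeasurableSet s} =>
        |((gaussianPi (μseq n) B) s.1).toReal - ((gaussianPi μ B) s.1).toReal|) := by
      refine ⟨∑ i, gDist (w n i), ?_⟩
      rintro x ⟨s, rfl⟩
      exact hsetb n s.1 s.2
    have := le_ciSup hb ⟨∅, MeasurableSet.empty⟩
    refine le_trans ?_ this
    simp
  have hsum : Tendsto (fun n => ∑ i, gDist (w n i)) atTop (𝓝 0) := by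
    have hco : ∀ i : Fin k, Tendsto (fun n => gDist (w n i)) atTop (𝓝 0) := by
      intro i
      refine gDist_tendsto ?_
      have := ((continuous_apply i).tendsto (0 : Fin k → ℝ)).comp hw0
      simpa [Function.comp_def] using this
    have := tendsto_finset_sum (Finset.univ : Finset (Fin k)) fun i _ => hco i
    simpa using this
  exact squeeze_zero htv_nonneg htv_le hsum
end
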